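/- Let g_d : (0,∞) → [0,∞) be measurable with d ∫_0^∞ g_d(x) x^{d-1} dx = 1, and let X have density f(x) = g_d(max{x_1,...,x_d}) on (0,∞)^d. Then the (d-1)-dimensional marginal obtained by integrating out the last coordinate has density g_{d-1}(max{x_1,...,x_{d-1}}) where g_{d-1}(x) = ∫_x^∞ g_d(u) du + x g_d(x), and g_{d-1} satisfies (d-1) ∫_0^∞ g_{d-1}(x) x^{d-2} dx = 1. -/

import Mathlib

open MeasureTheory Set

/-- Marginalization of ℓ∞-norm symmetric densities: if `X` has density
`f(x) = g_d(max{x_1, …, x_d})` on `(0,∞)^d` with `d ∫_0^∞ g_d(x) x^{d-1} dx = 1`, then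
integrating out the last coordinate yields the density `g_{d-1}(max{x_1, …, x_{d-1}})`
where `g_{d-1}(x) = ∫_x^∞ g_d(u) du + x g_d(x)`, and `g_{d-1}` satisfies the corresponding
normalization `(d-1) ∫_0^∞ g_{d-1}(x) x^{d-2} dx = 1`. -/
theorem linf_symmetric_marginal {d : ℕ} (hd : 2 ≤ d) (g : ℝ → ℝ)
    (hg : Measurable g) (hgpos : ∀ x, 0 ≤ g x)
    (hnorm : (d : ℝ) * ∫ x in Set.Ioi (0 : ℝ), g x * x ^ (d - 1) = 1) :
    (∀ x : Fin (d - 1) → ℝ, (∀ i, 0 < x i) →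
      (∫ u in Set.Ioi (0 : ℝ), g (max (⨆ i, x i) u))
        = (∫ u in Set.Ioi (⨆ i, x i), g u) + (⨆ i, x i) * g (⨆ i, x i)) ∧
    ((d : ℝ) - 1) *
      (∫ x in Set.Ioi (0 : ℝ), ((∫ u in Set.Ioi x, g u) + x * g x) * x ^ (d - 2)) = 1 := by
  obtain ⟨k, rfl⟩ : ∃ k, d = k + 2 := ⟨d - 2, by omega⟩
  have hexp1 : k + 2 - 1 = k + 1 := rfl
  have hexp2 : k + 2 - 2 = k := rfl
  rw [hexp1] at hnorm
  -- integrability of g x * x^(k+1) on (0,∞)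
  have hInt : IntegrableOn (fun x => g x * x ^ (k + 1)) (Ioi (0 : ℝ)) := by
    by_contra h
    rw [integral_undef h, mul_zero] at hnorm
    exact zero_ne_one hnorm
  have hd2 : ((k : ℝ) + 2) ≠ 0 := by positivity
  have hI : ∫ x in Ioi (0 : ℝ), g x * x ^ (k + 1) = 1 / ((k : ℝ) + 2) := by
    rw [eq_div_iff hd2, mul_comm]
    push_cast at hnorm ⊢
    exact hnorm
  -- g is integrable on Ioi M for M > 0
  have hIntTail : ∀ M : ℝ, 0 < M → IntegrableOn g (Ioi M) := by
    intro M hM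
    have hb : IntegrableOn (fun x => g x * x ^ (k + 1) / M ^ (k + 1)) (Ioi M) :=
      (hInt.mono_set (Ioi_subset_Ioi hM.le)).div_const _
    refine hb.mono' hg.aestronglyMeasurable ?_
    filter_upwards [ae_restrict_mem measurableSet_Ioi] with u hu
    rw [Real.norm_of_nonneg (hgpos u), mul_div_assoc]
    refine le_mul_of_one_le_right (hgpos u) ?_
    rw [one_le_div (by positivity)]
    exact pow_le_pow_left₀ hM.le (le_of_lt hu) _
  constructor
  · -- Part 1
    intro x hx
    set M := ⨆ i, x i with hM
    have hMpos : 0 < M :=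
      lt_of_lt_of_le (hx ⟨0, by omega⟩)
        (le_ciSup (Set.Finite.bddAbove (Set.finite_range x)) ⟨0, by omega⟩)
    have h1 : ∫ u in Ioc (0 : ℝ) M, g (max M u) = M * g M := by
      rw [setIntegral_congr_fun measurableSet_Ioc (fun u hu => by rw [max_eq_left hu.2]),
        setIntegral_const, measureReal_def, Real.volume_Ioc, smul_eq_mul, sub_zero,
        ENNReal.toReal_ofReal hMpos.le]
    have h2 : ∫ u in Ioi M, g (max M u) = ∫ u in Ioi M, g u :=
      setIntegral_congr_fun measurableSet_Ioi (fun u hu => by rw [max_eq_right (le_of_lt hu)])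
    have hi1 : IntegrableOn (fun u => g (max M u)) (Ioc (0 : ℝ) M) := by
      refine (integrableOn_const (C := g M) ?_).congr_fun
        (fun u hu => by rw [max_eq_left hu.2]) measurableSet_Ioc
      · rw [Real.volume_Ioc]; exact ENNReal.ofReal_ne_top
    have hi2 : IntegrableOn (fun u => g (max M u)) (Ioi M) :=
      (hIntTail M hMpos).congr_fun (fun u hu => by rw [max_eq_right (le_of_lt hu)])
        measurableSet_Ioi
    rw [← Ioc_union_Ioi_eq_Ioi hMpos.le,
      setIntegral_union Ioc_disjoint_Ioi_same measurableSet_Ioi hi1 hi2, h1, h2]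
    ring
  · -- Part 2
    rw [hexp2]
    set G : ℝ → ENNReal := fun u => ENNReal.ofReal (g u) with hG
    have hGm : Measurable G := ENNReal.measurable_ofReal.comp hg
    -- key value of ∫⁻ G u * u^(k+1)
    have hA : ∫⁻ u in Ioi (0 : ℝ), G u * ENNReal.ofReal (u ^ (k + 1))
        = ENNReal.ofReal (1 / ((k : ℝ) + 2)) := by
      rw [← hI, ofReal_integral_eq_lintegral_ofReal hInt
        ((ae_restrict_mem measurableSet_Ioi).mono fun u hu =>
          mul_nonneg (hgpos u) (pow_nonneg (le_of_lt hu) _))]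
      refine lintegral_congr fun u => ?_
      rw [ENNReal.ofReal_mul (hgpos u)]
    -- H and its measurability
    set H : ℝ → ℝ := fun x => ∫ u in Ioi x, g u with hHdef
    have hHmeas : Measurable H := by
      have h1 : StronglyMeasurable fun p : ℝ × ℝ => (Ioi p.1).indicator g p.2 := by
        have : (fun p : ℝ × ℝ => (Ioi p.1).indicator g p.2)
            = {q : ℝ × ℝ | q.1 < q.2}.indicator fun q => g q.2 := by
          ext p
          by_cases h : p.1 < p.2 <;> simp [Set.indicator, h]
        rw [this]
        exact ((hg.comp measurable_snd).indicator
          (measurableSet_lt measurable_fst measurable_snd)).stronglyMeasurable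
      have h2 := h1.integral_prod_right' (ν := volume)
      have heq : (fun x : ℝ => ∫ u in Ioi x, g u)
          = fun x : ℝ => ∫ u, (Ioi x).indicator g u := by
        funext x
        exact (integral_indicator measurableSet_Ioi).symm
      show Measurable fun x : ℝ => ∫ u in Ioi x, g u
      rw [heq]
      exact h2.measurable
    have hHnonneg : ∀ x, 0 ≤ H x := fun x =>
      setIntegral_nonneg measurableSet_Ioi fun u _ => hgpos u
    have hHofReal : ∀ x : ℝ, 0 < x → ENNReal.ofReal (H x) = ∫⁻ u in Ioi x, G u := fun x hx =>
      ofReal_integral_eq_lintegral_ofReal (hIntTail x hx)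
        (Filter.Eventually.of_forall hgpos)
    -- Tonelli computation
    have hB : ∫⁻ x in Ioi (0 : ℝ), (∫⁻ u in Ioi x, G u) * ENNReal.ofReal (x ^ k)
        = ENNReal.ofReal (1 / (((k : ℝ) + 2) * ((k : ℝ) + 1))) := by
      have e1 : ∫⁻ x in Ioi (0 : ℝ), (∫⁻ u in Ioi x, G u) * ENNReal.ofReal (x ^ k)
          = ∫⁻ x in Ioi (0 : ℝ), ∫⁻ u in Ioi (0 : ℝ),
              (Ioi x).indicator G u * ENNReal.ofReal (x ^ k) := by
        refine setLIntegral_congr_fun measurableSet_Ioi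
          (fun x hx => ?_)
        rw [lintegral_mul_const' _ _ ENNReal.ofReal_ne_top,
          lintegral_indicator measurableSet_Ioi,
          Measure.restrict_restrict measurableSet_Ioi,
          Set.inter_eq_left.mpr (Ioi_subset_Ioi hx.le)]
      have hswap : ∫⁻ x in Ioi (0 : ℝ), ∫⁻ u in Ioi (0 : ℝ),
            (Ioi x).indicator G u * ENNReal.ofReal (x ^ k)
          = ∫⁻ u in Ioi (0 : ℝ), ∫⁻ x in Ioi (0 : ℝ),
            (Ioi x).indicator G u * ENNReal.ofReal (x ^ k) := by
        apply lintegral_lintegral_swap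
        have : (Function.uncurry fun x u => (Ioi x).indicator G u * ENNReal.ofReal (x ^ k))
            = fun p : ℝ × ℝ =>
              {q : ℝ × ℝ | q.1 < q.2}.indicator (fun q => G q.2) p
                * ENNReal.ofReal (p.1 ^ k) := by
          ext p
          by_cases h : p.1 < p.2 <;>
            simp [Function.uncurry, Set.indicator, h]
        rw [this]
        exact (((hGm.comp measurable_snd).indicator
          (measurableSet_lt measurable_fst measurable_snd)).mul
          ((measurable_fst.pow_const k).ennreal_ofReal)).aemeasurable
      have e2 : ∫⁻ u in Ioi (0 : ℝ), ∫⁻ x in Ioi (0 : ℝ),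
            (Ioi x).indicator G u * ENNReal.ofReal (x ^ k)
          = ∫⁻ u in Ioi (0 : ℝ), G u * ENNReal.ofReal (u ^ (k + 1))
              * ENNReal.ofReal (1 / ((k : ℝ) + 1)) := by
        refine setLIntegral_congr_fun measurableSet_Ioi
          (fun u hu => ?_)
        have hpt : ∀ x : ℝ, (Ioi x).indicator G u * ENNReal.ofReal (x ^ k)
            = (Iio u).indicator (fun x => G u * ENNReal.ofReal (x ^ k)) x := by
          intro x
          by_cases h : x < u <;> simp [Set.indicator, h]
        simp_rw [hpt]
        rw [lintegral_indicator measurableSet_Iio,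
          Measure.restrict_restrict measurableSet_Iio, Set.Iio_inter_Ioi,
          lintegral_const_mul _
            (by fun_prop : Measurable fun x : ℝ => ENNReal.ofReal (x ^ k))]
        have hpow : ∫⁻ x in Ioo (0 : ℝ) u, ENNReal.ofReal (x ^ k)
            = ENNReal.ofReal (u ^ (k + 1) * (1 / ((k : ℝ) + 1))) := by
          rw [Measure.restrict_congr_set Ioo_ae_eq_Ioc,
            ← ofReal_integral_eq_lintegral_ofReal
              ((continuous_pow k).integrableOn_Ioc)
              ((ae_restrict_mem measurableSet_Ioc).mono fun x hx =>
                pow_nonneg (le_of_lt hx.1) _)]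
          congr 1
          rw [← intervalIntegral.integral_of_le (le_of_lt hu), integral_pow]
          push_cast
          ring
        rw [hpow, ENNReal.ofReal_mul (pow_nonneg (le_of_lt hu) _), mul_assoc]
      rw [e1, hswap, e2, lintegral_mul_const' _ _ ENNReal.ofReal_ne_top, hA,
        ← ENNReal.ofReal_mul
          (le_of_lt (by positivity : (0:ℝ) < 1 / ((k : ℝ) + 2))), one_div_mul_one_div]
    -- now back to Bochner integrals
    have hφmeas : Measurable fun x : ℝ => H x * x ^ k :=
      hHmeas.mul (measurable_id.pow_const k)
    have hφnonneg : ∀ᵐ x ∂(volume.restrict (Ioi (0 : ℝ))), 0 ≤ H x * x ^ k := by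
      filter_upwards [ae_restrict_mem measurableSet_Ioi] with x hx
      exact mul_nonneg (hHnonneg x) (pow_nonneg (le_of_lt hx) k)
    have hφlint : ∫⁻ x in Ioi (0 : ℝ), ENNReal.ofReal (H x * x ^ k)
        = ENNReal.ofReal (1 / (((k : ℝ) + 2) * ((k : ℝ) + 1))) := by
      rw [← hB]
      refine setLIntegral_congr_fun measurableSet_Ioi
        (fun x hx => ?_)
      rw [ENNReal.ofReal_mul (hHnonneg x), hHofReal x hx]
    have hφint : IntegrableOn (fun x => H x * x ^ k) (Ioi (0 : ℝ)) := by
      refine ⟨hφmeas.aestronglyMeasurable, ?_⟩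
      rw [hasFiniteIntegral_iff_ofReal hφnonneg, hφlint]
      exact ENNReal.ofReal_lt_top
    have hφval : ∫ x in Ioi (0 : ℝ), H x * x ^ k = 1 / (((k : ℝ) + 2) * ((k : ℝ) + 1)) := by
      rw [integral_eq_lintegral_of_nonneg_ae hφnonneg hφmeas.aestronglyMeasurable, hφlint,
        ENNReal.toReal_ofReal (by positivity)]
    have hfun : (fun x : ℝ => x * g x * x ^ k) = fun x => g x * x ^ (k + 1) := by
      funext x; rw [pow_succ]; ring
    have hψint : IntegrableOn (fun x : ℝ => x * g x * x ^ k) (Ioi (0 : ℝ)) := by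
      rw [hfun]; exact hInt
    have hψval : ∫ x in Ioi (0 : ℝ), x * g x * x ^ k = 1 / ((k : ℝ) + 2) := by
      rw [hfun, hI]
    have hsum : ∫ x in Ioi (0 : ℝ), ((∫ u in Ioi x, g u) + x * g x) * x ^ k
        = 1 / (((k : ℝ) + 2) * ((k : ℝ) + 1)) + 1 / ((k : ℝ) + 2) := by
      have hpt : ∀ x : ℝ, ((∫ u in Ioi x, g u) + x * g x) * x ^ k
          = H x * x ^ k + x * g x * x ^ k := fun x => by simp only [hHdef]; ring
      simp_rw [hpt]
      rw [integral_add hφint hψint, hφval, hψval]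
    rw [hsum]
    have hd1 : ((k : ℝ) + 1) ≠ 0 := by positivity
    push_cast
    field_simp
    ring
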